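/- arXiv:2302.14174 — 4 statements merged into one kernel-verified Lean document; each statement's English description precedes it below -/
import Mathlib

section
/- Let θ, φ ∈ ℝ with sin θ ≠ 0. The four vectors ζ̂¹ = (−1, 1, 0, 0), ζ̂² = (−1, cos θ, sin θ sin φ, −sin θ cos φ), ζ̂³ = (−1, cos θ, −sin θ sin φ, sin θ cos φ), ζ̂⁴ = (−1, cos θ, sin θ cos φ, sin θ sin φ) in ℝ⁴ are all lightlike for the Minkowski form η and are linearly independent; consequently they span ℝ⁴, and in particular the lightlike vector ζ = (−1, 0, cos φ, sin φ) is a linear combination of ζ̂¹, ζ̂², ζ̂³, ζ̂⁴. (This is the explicit choice of four lightlike covectors used in the fourth-order linearization, Section 5.2.) -/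
/-- The Minkowski bilinear form η(x, y) = −x₀y₀ + x₁y₁ + x₂y₂ + x₃y₃ on ℝ⁴. -/
def minkowski (x y : Fin 4 → ℝ) : ℝ :=
  -(x 0 * y 0) + x 1 * y 1 + x 2 * y 2 + x 3 * y 3

/-- A vector is lightlike if it is nonzero and η(x, x) = 0. -/
def IsLightlike (x : Fin 4 → ℝ) : Prop :=
  x ≠ 0 ∧ minkowski x x = 0

/-- The explicit choice of four lightlike covectors used in the fourth-order
linearization (Section 5.2): four lightlike, linearly independent vectors
spanning ℝ⁴, so that the lightlike vector ζ lies in their span. -/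
theorem four_lightlike_linearly_independent
    (θ φ : ℝ) (hθ : Real.sin θ ≠ 0) :
    let ζ₁ : Fin 4 → ℝ := ![-1, 1, 0, 0]
    let ζ₂ : Fin 4 → ℝ :=
      ![-1, Real.cos θ, Real.sin θ * Real.sin φ, -(Real.sin θ * Real.cos φ)]
    let ζ₃ : Fin 4 → ℝ :=
      ![-1, Real.cos θ, -(Real.sin θ * Real.sin φ), Real.sin θ * Real.cos φ]
    let ζ₄ : Fin 4 → ℝ :=
      ![-1, Real.cos θ, Real.sin θ * Real.cos φ, Real.sin θ * Real.sin φ]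
    let ζ : Fin 4 → ℝ := ![-1, 0, Real.cos φ, Real.sin φ]
    (IsLightlike ζ₁ ∧ IsLightlike ζ₂ ∧ IsLightlike ζ₃ ∧ IsLightlike ζ₄) ∧
    LinearIndependent ℝ ![ζ₁, ζ₂, ζ₃, ζ₄] ∧
    Submodule.span ℝ {ζ₁, ζ₂, ζ₃, ζ₄} = ⊤ ∧
    (IsLightlike ζ ∧ ∃ a₁ a₂ a₃ a₄ : ℝ, ζ = a₁ • ζ₁ + a₂ • ζ₂ + a₃ • ζ₃ + a₄ • ζ₄) := by
  intro ζ₁ ζ₂ ζ₃ ζ₄ ζ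
  have h1 : Real.sin θ ^ 2 + Real.cos θ ^ 2 = 1 := Real.sin_sq_add_cos_sq θ
  have h2 : Real.sin φ ^ 2 + Real.cos φ ^ 2 = 1 := Real.sin_sq_add_cos_sq φ
  have hc : Real.cos θ ≠ 1 := by intro h; apply hθ; nlinarith
  have hc' : 1 - Real.cos θ ≠ 0 := fun h => hc (by linarith)
  have hli : LinearIndependent ℝ ![ζ₁, ζ₂, ζ₃, ζ₄] := by
    have key : LinearIndependent ℝ
        (fun i => (Matrix.of ![ζ₁, ζ₂, ζ₃, ζ₄]) i) := by
      change LinearIndependent ℝ (Matrix.of ![ζ₁, ζ₂, ζ₃, ζ₄]).row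
      rw [Matrix.linearIndependent_rows_iff_isUnit, Matrix.isUnit_iff_isUnit_det,
        isUnit_iff_ne_zero]
      have hdet := Matrix.det_succ_row_zero (Matrix.of ![ζ₁, ζ₂, ζ₃, ζ₄])
      simp only [ζ₁, ζ₂, ζ₃, ζ₄] at hdet ⊢
      simp [Fin.sum_univ_succ, Matrix.det_fin_three, Fin.succAbove] at hdet
      rw [hdet]
      intro h
      apply hc
      have hs : Real.sin θ ^ 2 ≠ 0 := pow_ne_zero 2 hθ
      have : Real.sin θ ^ 2 * (Real.cos θ - 1) = 0 := by nlinarith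
      have := (mul_eq_zero.mp this).resolve_left hs
      linarith
    exact key
  refine ⟨⟨⟨?_, ?_⟩, ⟨?_, ?_⟩, ⟨?_, ?_⟩, ⟨?_, ?_⟩⟩, hli, ?_, ⟨?_, ?_⟩, ?_⟩
  · intro h; have := congrFun h 0; simp [ζ₁] at this
  · simp [minkowski, ζ₁]
  · intro h; have := congrFun h 0; simp [ζ₂] at this
  · simp only [minkowski, ζ₂]; simp; nlinarith
  · intro h; have := congrFun h 0; simp [ζ₃] at this
  · simp only [minkowski, ζ₃]; simp; nlinarith
  · intro h; have := congrFun h 0; simp [ζ₄] at this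
  · simp only [minkowski, ζ₄]; simp; nlinarith
  · -- span
    have hr : Set.range ![ζ₁, ζ₂, ζ₃, ζ₄] = {ζ₁, ζ₂, ζ₃, ζ₄} := by
      ext x; simp [Matrix.range_cons, Matrix.range_empty]; tauto
    rw [← hr]
    apply hli.span_eq_top_of_card_eq_finrank
    simp [Module.finrank_fintype_fun_eq_card]
  · intro h; have := congrFun h 0; simp [ζ] at this
  · simp only [minkowski, ζ]; simp; nlinarith
  · refine ⟨-Real.cos θ / (1 - Real.cos θ), (1 + Real.cos θ / (1 - Real.cos θ) - 1 / Real.sin θ) / 2,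
      (1 + Real.cos θ / (1 - Real.cos θ) - 1 / Real.sin θ) / 2, 1 / Real.sin θ, ?_⟩
    funext i
    fin_cases i <;>
      simp [ζ, ζ₁, ζ₂, ζ₃, ζ₄] <;> field_simp <;> ring
end

section
/- Let θ, φ ∈ ℝ. Set ζ̂ = (−1, −cos φ, sin φ, 0), ζ̂¹ = (−1, 1, 0, 0), ζ̂² = (−1, cos θ, sin θ, 0), ζ̂³ = (−1, cos θ, −sin θ, 0) in ℝ⁴, and define λ = 2 sin θ (1 − cos θ), α₁ = −2 sin θ (cos φ + cos θ), α₂ = (1 + cos φ) sin θ + (1 − cos θ) sin φ, α₃ = (1 + cos φ) sin θ − (1 − cos θ) sin φ. Then: (i) ζ̂, ζ̂¹, ζ̂², ζ̂³ are all lightlike for the Minkowski form η; (ii) λ·ζ̂ = α₁·ζ̂¹ + α₂·ζ̂² + α₃·ζ̂³; (iii) η(ζ̂¹, ζ̂²) = cos θ − 1, η(ζ̂¹, ζ̂³) = cos θ − 1, and η(ζ̂², ζ̂³) = 2(cos²θ − 1); (iv) if in addition sin θ ≠ 0, then ζ̂¹, ζ̂², ζ̂³ are linearly independent. (These are the explicit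 constructions and computations in the proof of Lemma 6.1.) -/
/-- The explicit constructions and computations in the proof of Lemma 6.1. -/
theorem lemma61_constructions (θ φ : ℝ) :
    let ζ : Fin 4 → ℝ := ![-1, -Real.cos φ, Real.sin φ, 0]
    let ζ₁ : Fin 4 → ℝ := ![-1, 1, 0, 0]
    let ζ₂ : Fin 4 → ℝ := ![-1, Real.cos θ, Real.sin θ, 0]
    let ζ₃ : Fin 4 → ℝ := ![-1, Real.cos θ, -Real.sin θ, 0]
    let lam : ℝ := 2 * Real.sin θ * (1 - Real.cos θ)
    let α₁ : ℝ := -2 * Real.sin θ * (Real.cos φ + Real.cos θ)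
    let α₂ : ℝ := (1 + Real.cos φ) * Real.sin θ + (1 - Real.cos θ) * Real.sin φ
    let α₃ : ℝ := (1 + Real.cos φ) * Real.sin θ - (1 - Real.cos θ) * Real.sin φ
    (IsLightlike ζ ∧ IsLightlike ζ₁ ∧ IsLightlike ζ₂ ∧ IsLightlike ζ₃) ∧
    lam • ζ = α₁ • ζ₁ + α₂ • ζ₂ + α₃ • ζ₃ ∧
    (minkowski ζ₁ ζ₂ = Real.cos θ - 1 ∧
     minkowski ζ₁ ζ₃ = Real.cos θ - 1 ∧
     minkowski ζ₂ ζ₃ = 2 * (Real.cos θ ^ 2 - 1)) ∧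
    (Real.sin θ ≠ 0 → LinearIndependent ℝ ![ζ₁, ζ₂, ζ₃]) := by
  intro ζ ζ₁ ζ₂ ζ₃ lam α₁ α₂ α₃
  have pyθ := Real.sin_sq_add_cos_sq θ
  have pyφ := Real.sin_sq_add_cos_sq φ
  have nz : ∀ a b c : ℝ, (![(-1 : ℝ), a, b, c] : Fin 4 → ℝ) ≠ 0 := by
    intro a b c h
    have := congrFun h 0
    simp at this
  refine ⟨⟨⟨nz _ _ _, ?_⟩, ⟨nz _ _ _, ?_⟩, ⟨nz _ _ _, ?_⟩, ⟨nz _ _ _, ?_⟩⟩, ?_, ⟨?_, ?_, ?_⟩, ?_⟩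
  · simp [minkowski, ζ]; nlinarith
  · simp [minkowski, ζ₁]
  · simp [minkowski, ζ₂]; nlinarith
  · simp [minkowski, ζ₃]; nlinarith
  · funext i
    fin_cases i <;>
      simp [ζ, ζ₁, ζ₂, ζ₃, lam, α₁, α₂, α₃] <;> nlinarith
  · simp [minkowski, ζ₁, ζ₂]; ring
  · simp [minkowski, ζ₁, ζ₃]; ring
  · simp [minkowski, ζ₂, ζ₃]; nlinarith
  · intro hs
    have hc : Real.cos θ - 1 ≠ 0 := by
      intro h
      have h1 : Real.sin θ ^ 2 = 0 := by nlinarith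
      exact hs (pow_eq_zero_iff (by norm_num) |>.mp h1)
    rw [Fintype.linearIndependent_iff]
    intro g hg
    have h0 := congrFun hg 0
    have h1 := congrFun hg 1
    have h2 := congrFun hg 2
    simp [Fin.sum_univ_three, ζ₁, ζ₂, ζ₃, Matrix.vecHead, Matrix.vecTail] at h0 h1 h2
    have hg12 : g 1 = g 2 := by
      have := mul_eq_zero.mp (show (g 1 - g 2) * Real.sin θ = 0 by linarith)
      rcases this with h | h
      · linarith
      · exact absurd h hs
    have key : (2 : ℝ) * (g 1 * (Real.cos θ - 1)) = 0 := by
      linear_combination h1 + h0 + (Real.cos θ - 1) * hg12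
    have hg1 : g 1 = 0 := by
      rcases mul_eq_zero.mp (show g 1 * (Real.cos θ - 1) = 0 by linarith) with h | h
      · exact h
      · exact absurd h hc
    intro i
    fin_cases i
    · show g 0 = 0; linarith [hg12, hg1]
    · exact hg1
    · show g 2 = 0; linarith [hg12, hg1]
end

section
/- Let θ, φ ∈ ℝ with sin θ ≠ 0 and cos φ + cos θ ≠ 0. Set ζ̂¹ = (−1, 1, 0, 0), ζ̂² = (−1, cos θ, sin θ, 0), ζ̂³ = (−1, cos θ, −sin θ, 0), α₁ = −2 sin θ (cos φ + cos θ), α₂ = (1 + cos φ) sin θ + (1 − cos θ) sin φ, α₃ = (1 + cos φ) sin θ − (1 − cos θ) sin φ, and assume α₂ ≠ 0 and α₃ ≠ 0. Put ζʲ = αⱼ·ζ̂ʲ for j = 1, 2, 3. Then η(ζʲ + ζᵏ, ζʲ + ζᵏ) ≠ 0 for all pairs j ≠ k, and I₃(ζ¹, ζ², ζ³) = −(2 cos θ + 1)/(2(cos φ + cos θ)). (This is the explicit evaluation of I₃ in the proof of Lemma 6.1, stated with the unordered-pair normalization of I₃.) -/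
/-- The quantity I₃ (unordered-pair normalization) from the proof of Lemma 6.1. -/
noncomputable def I3 (z₁ z₂ z₃ : Fin 4 → ℝ) : ℝ :=
  (z₁ 0 + z₂ 0 + z₃ 0) *
    ((z₁ 0 + z₂ 0) / minkowski (z₁ + z₂) (z₁ + z₂)
      + (z₁ 0 + z₃ 0) / minkowski (z₁ + z₃) (z₁ + z₃)
      + (z₂ 0 + z₃ 0) / minkowski (z₂ + z₃) (z₂ + z₃))

/-- The explicit evaluation of I₃ in the proof of Lemma 6.1. -/
theorem I3_value
    (θ φ : ℝ) (hθ : Real.sin θ ≠ 0) (hφθ : Real.cos φ + Real.cos θ ≠ 0)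
    (α₂ α₃ : ℝ)
    (hα₂ : α₂ = (1 + Real.cos φ) * Real.sin θ + (1 - Real.cos θ) * Real.sin φ)
    (hα₃ : α₃ = (1 + Real.cos φ) * Real.sin θ - (1 - Real.cos θ) * Real.sin φ)
    (h₂ : α₂ ≠ 0) (h₃ : α₃ ≠ 0) :
    let α₁ : ℝ := -2 * Real.sin θ * (Real.cos φ + Real.cos θ)
    let ζ₁ : Fin 4 → ℝ := α₁ • ![-1, 1, 0, 0]
    let ζ₂ : Fin 4 → ℝ := α₂ • ![-1, Real.cos θ, Real.sin θ, 0]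
    let ζ₃ : Fin 4 → ℝ := α₃ • ![-1, Real.cos θ, -Real.sin θ, 0]
    (minkowski (ζ₁ + ζ₂) (ζ₁ + ζ₂) ≠ 0 ∧
     minkowski (ζ₁ + ζ₃) (ζ₁ + ζ₃) ≠ 0 ∧
     minkowski (ζ₂ + ζ₃) (ζ₂ + ζ₃) ≠ 0) ∧
    I3 ζ₁ ζ₂ ζ₃
      = -(2 * Real.cos θ + 1) / (2 * (Real.cos φ + Real.cos θ)) := by
  intro α₁ ζ₁ ζ₂ ζ₃
  have hpy : Real.sin θ ^ 2 + Real.cos θ ^ 2 = 1 := Real.sin_sq_add_cos_sq θ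
  have hpyφ : Real.sin φ ^ 2 + Real.cos φ ^ 2 = 1 := Real.sin_sq_add_cos_sq φ
  have hc1 : Real.cos θ - 1 ≠ 0 := by
    intro h
    apply hθ
    have : Real.sin θ ^ 2 = 0 := by nlinarith
    exact pow_eq_zero_iff (n := 2) (by norm_num) |>.mp this
  have hα₁ : α₁ ≠ 0 :=
    mul_ne_zero (mul_ne_zero (by norm_num) hθ) hφθ
  have e12 : minkowski (ζ₁ + ζ₂) (ζ₁ + ζ₂) = 2 * α₁ * α₂ * (Real.cos θ - 1) := by
    simp only [minkowski, ζ₁, ζ₂, Pi.add_apply, Pi.smul_apply, smul_eq_mul,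
      Matrix.cons_val_zero, Matrix.cons_val_one, Matrix.head_cons,
      Matrix.cons_val_two, Matrix.cons_val_three, Matrix.tail_cons]
    linear_combination α₂ ^ 2 * hpy
  have e13 : minkowski (ζ₁ + ζ₃) (ζ₁ + ζ₃) = 2 * α₁ * α₃ * (Real.cos θ - 1) := by
    simp only [minkowski, ζ₁, ζ₃, Pi.add_apply, Pi.smul_apply, smul_eq_mul,
      Matrix.cons_val_zero, Matrix.cons_val_one, Matrix.head_cons,
      Matrix.cons_val_two, Matrix.cons_val_three, Matrix.tail_cons]
    linear_combination α₃ ^ 2 * hpy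
  have e23 : minkowski (ζ₂ + ζ₃) (ζ₂ + ζ₃) = -4 * α₂ * α₃ * Real.sin θ ^ 2 := by
    simp only [minkowski, ζ₂, ζ₃, Pi.add_apply, Pi.smul_apply, smul_eq_mul,
      Matrix.cons_val_zero, Matrix.cons_val_one, Matrix.head_cons,
      Matrix.cons_val_two, Matrix.cons_val_three, Matrix.tail_cons]
    linear_combination (α₂ + α₃) ^ 2 * hpy
  refine ⟨⟨?_, ?_, ?_⟩, ?_⟩
  · rw [e12]; exact mul_ne_zero (mul_ne_zero (mul_ne_zero two_ne_zero hα₁) h₂) hc1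
  · rw [e13]; exact mul_ne_zero (mul_ne_zero (mul_ne_zero two_ne_zero hα₁) h₃) hc1
  · rw [e23]
    exact mul_ne_zero (mul_ne_zero (mul_ne_zero (by norm_num) h₂) h₃) (pow_ne_zero _ hθ)
  · have ez : ∀ (a : ℝ), ((a • ![-1, 1, 0, (0:ℝ)]) 0 = -a) := by intro a; simp
    rw [I3, e12, e13, e23]
    have z10 : ζ₁ 0 = -α₁ := by simp [ζ₁]
    have z20 : ζ₂ 0 = -α₂ := by simp [ζ₂]
    have z30 : ζ₃ 0 = -α₃ := by simp [ζ₃]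
    rw [z10, z20, z30]
    have hsum : α₂ + α₃ = 2 * (1 + Real.cos φ) * Real.sin θ := by
      rw [hα₂, hα₃]; ring
    have hprod : α₂ * α₃
        = 2 * (1 + Real.cos φ) * (1 - Real.cos θ) * (Real.cos φ + Real.cos θ) := by
      rw [hα₂, hα₃]
      linear_combination (1 + Real.cos φ)^2 * hpy - (1 - Real.cos θ)^2 * hpyφ
    rw [show α₁ = -2*Real.sin θ*(Real.cos φ+Real.cos θ) from rfl]
    field_simp
    linear_combination ((2*Real.sin θ*(Real.cos φ+Real.cos θ))*(-4*Real.sin θ*(2*Real.sin θ*(Real.cos φ+Real.cos θ))+4*(Real.cos φ+Real.cos θ)*(Real.cos θ-1)) - (8*Real.sin θ*(α₂*α₃)) - (-4*Real.sin θ*(2*Real.sin θ*(Real.cos φ+Real.cos θ))+4*(Real.cos φ+Real.cos θ)*(Real.cos θ-1))*((α₂+α₃)+(2*(1+Real.cos φ)*Real.sin θ))) * hsum + (8*Real.sin θ*((2*Real.sin θ*(Real.cos φ+Real.cos θ))-(2*(1+Real.cos φ)*Real.sin θ)) + 8*Real.sin θ^2*(Real.cos θ-1)*(2*Real.cos θ+1))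 * hprod + (-32*Real.sin θ^2*(Real.cos θ-1)*(1+Real.cos φ)*(Real.cos φ+Real.cos θ)) * hpy
end

section
/- Let φ ∈ ℝ with cos φ ≠ 1/2, and set ζ = (−1, −cos φ, sin φ, 0) ∈ ℝ⁴ (a lightlike vector). Then there exist two triples (ζ^{1,k}, ζ^{2,k}, ζ^{3,k}), k = 1, 2, of nonzero lightlike vectors in ℝ⁴ such that for each k: ζ^{1,k} + ζ^{2,k} + ζ^{3,k} = ζ, η(ζ^{j,k} + ζ^{i,k}, ζ^{j,k} + ζ^{i,k}) ≠ 0 for every pair i ≠ j, and moreover I₃(ζ^{1,1}, ζ^{2,1}, ζ^{3,1}) ≠ I₃(ζ^{1,2}, ζ^{2,2}, ζ^{3,2}); equivalently, the two vectors (1, I₃(ζ^{1,k}, ζ^{2,k}, ζ^{3,k})) ∈ ℝ², k = 1, 2, are linearly independent. (Coordinate version of Lemma 6.1: two decompositions of a lightlike covector into three lightlike covectors with distinct values of I₃.) -/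
lemma cons_val_mk_two {α : Type*} (a b c : α) (h : 2 < 3) :
    (![a,b,c] : Fin 3 → α) ⟨2,h⟩ = c := rfl

lemma add_vec (a b c d a' b' c' d' : ℝ) :
    ![a,b,c,d] + ![a',b',c',d'] = ![a+a',b+b',c+c',d+d'] := by
  funext i; fin_cases i <;> simp

lemma minkowski_vec (t x y w t' x' y' w' : ℝ) :
    minkowski ![t,x,y,w] ![t',x',y',w'] = -(t*t') + x*x' + y*y' + w*w' := by
  simp [minkowski]

lemma I3_one (c s : ℝ) (h : s^2 + c^2 = 1) :
    I3 ![1,-c,s,0] ![-1,0,0,-1] ![-1,0,0,1] = -(1/2) := by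
  have h12 : minkowski (![(1:ℝ),-c,s,0] + ![-1,0,0,-1]) (![(1:ℝ),-c,s,0] + ![-1,0,0,-1]) = 2 := by
    rw [add_vec, minkowski_vec]; linear_combination h
  have h13 : minkowski (![(1:ℝ),-c,s,0] + ![-1,0,0,1]) (![(1:ℝ),-c,s,0] + ![-1,0,0,1]) = 2 := by
    rw [add_vec, minkowski_vec]; linear_combination h
  have h23 : minkowski (![(-1:ℝ),0,0,-1] + ![-1,0,0,1]) (![(-1:ℝ),0,0,-1] + ![-1,0,0,1]) = -4 := by
    rw [add_vec, minkowski_vec]; ring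
  simp only [I3, h12, h13, h23]
  norm_num

lemma I3_two (c s : ℝ) (h : s^2 + c^2 = 1) :
    I3 ![-(1/2), c/2, -(s/2), 0] ![2,0,0,2] ![-(5/2), -(3*c/2), 3*s/2, -2] = -(5/4) := by
  have h12 : minkowski (![(-(1/2):ℝ), c/2, -(s/2), 0] + ![2,0,0,2])
      (![(-(1/2):ℝ), c/2, -(s/2), 0] + ![2,0,0,2]) = 2 := by
    rw [add_vec, minkowski_vec]; linear_combination (1/4 : ℝ) * h
  have h13 : minkowski (![(-(1/2):ℝ), c/2, -(s/2), 0] + ![-(5/2), -(3*c/2), 3*s/2, -2])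
      (![(-(1/2):ℝ), c/2, -(s/2), 0] + ![-(5/2), -(3*c/2), 3*s/2, -2]) = -4 := by
    rw [add_vec, minkowski_vec]; linear_combination h
  have h23 : minkowski (![(2:ℝ),0,0,2] + ![-(5/2), -(3*c/2), 3*s/2, -2])
      (![(2:ℝ),0,0,2] + ![-(5/2), -(3*c/2), 3*s/2, -2]) = 2 := by
    rw [add_vec, minkowski_vec]; linear_combination (9/4 : ℝ) * h
  simp only [I3, h12, h13, h23]
  norm_num

/-- Coordinate version of Lemma 6.1: two decompositions of a lightlike vector
into three lightlike vectors with distinct values of I₃. -/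
theorem exists_two_triples_distinct_I3
    (φ : ℝ) (hφ : Real.cos φ ≠ 1 / 2) :
    let ζ : Fin 4 → ℝ := ![-1, -Real.cos φ, Real.sin φ, 0]
    ∃ z : Fin 2 → Fin 3 → (Fin 4 → ℝ),
      (∀ k : Fin 2, ∀ j : Fin 3, IsLightlike (z k j)) ∧
      (∀ k : Fin 2, z k 0 + z k 1 + z k 2 = ζ) ∧
      (∀ k : Fin 2, ∀ i j : Fin 3, i ≠ j →
        minkowski (z k i + z k j) (z k i + z k j) ≠ 0) ∧
      I3 (z 0 0) (z 0 1) (z 0 2) ≠ I3 (z 1 0) (z 1 1) (z 1 2) ∧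
      LinearIndependent ℝ
        ![(![1, I3 (z 0 0) (z 0 1) (z 0 2)] : Fin 2 → ℝ),
          (![1, I3 (z 1 0) (z 1 1) (z 1 2)] : Fin 2 → ℝ)] := by
  intro ζ
  have hcs : Real.sin φ ^ 2 + Real.cos φ ^ 2 = 1 := Real.sin_sq_add_cos_sq φ
  set c := Real.cos φ with hc
  set s := Real.sin φ with hs
  refine ⟨![![![1,-c,s,0], ![-1,0,0,-1], ![-1,0,0,1]],
           ![![-(1/2), c/2, -(s/2), 0], ![2,0,0,2], ![-(5/2), -(3*c/2), 3*s/2, -2]]],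
         ?_, ?_, ?_, ?_⟩
  · -- lightlike
    intro k j
    fin_cases k <;> fin_cases j <;>
      exact ⟨fun hh => by simpa using congrFun hh 0,
             by simp only [Fin.isValue, Fin.mk_zero, Fin.mk_one, Matrix.cons_val_zero, Matrix.cons_val_one,
        Matrix.head_cons, Matrix.cons_val_two, Matrix.tail_cons, cons_val_mk_two]; rw [minkowski_vec]; ring_nf; try linarith [hcs]⟩
  · -- sums
    intro k
    fin_cases k <;> (funext i; simp only [ζ]; fin_cases i <;> simp <;> ring)
  · -- pairwise nonzero
    intro k i j hij
    fin_cases k <;> fin_cases i <;> fin_cases j <;>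
      first
        | exact absurd rfl hij
        | (simp only [Fin.isValue, Fin.mk_zero, Fin.mk_one, Matrix.cons_val_zero, Matrix.cons_val_one,
        Matrix.head_cons, Matrix.cons_val_two, Matrix.tail_cons, cons_val_mk_two];
           rw [add_vec, minkowski_vec]; intro h0; ring_nf at h0; linarith [hcs])
  · -- distinct I3 values and linear independence
    have e1 : I3 ![1,-c,s,0] ![-1,0,0,-1] ![-1,0,0,1] = -(1/2) := I3_one c s hcs
    have e2 : I3 ![-(1/2), c/2, -(s/2), 0] ![2,0,0,2] ![-(5/2), -(3*c/2), 3*s/2, -2] = -(5/4) :=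
      I3_two c s hcs
    simp only [Matrix.cons_val_zero, Matrix.cons_val_one, Matrix.head_cons, Matrix.cons_val_two,
      Matrix.tail_cons, e1, e2]
    refine ⟨by norm_num, ?_⟩
    rw [linearIndependent_fin2]
    constructor
    · intro h
      simpa using congrFun h 0
    · intro a h
      have h0 := congrFun h 0
      have h1 := congrFun h 1
      simp at h0 h1
      rw [h0] at h1
      norm_num at h1
end
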